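/- Let n be a positive natural number and let A = Matrix (Fin n) (Fin n) ℂ be the algebra of n×n complex matrices. Let Δ : A → A be a map (not assumed linear) such that for every pair x, y ∈ A there exists a ℂ-linear map D : A → A (depending on x, y) satisfying D(uv) = D(u)v + uD(v) for all u, v ∈ A, Δ(x) = D(x), and Δ(y) = D(y). Then Δ is an inner derivation: there exists a ∈ A such that Δ(x) = a·x − x·a for all x ∈ A. -/

import Mathlib

namespace Stmt10Aux

open Matrix

variable {n : ℕ}

/-- Matrix units. -/
noncomputable def E (i j : Fin n) : Matrix (Fin n) (Fin n) ℂ :=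
  Matrix.single i j (1 : ℂ)

lemma E_smul (x : Matrix (Fin n) (Fin n) ℂ) (i j : Fin n) :
    Matrix.single i j (x i j) = x i j • E i j := by
  rw [E, Matrix.smul_single, smul_eq_mul, mul_one]

lemma trace_mul_E (m : Matrix (Fin n) (Fin n) ℂ) (i j : Fin n) :
    (m * E j i).trace = m i j := by
  classical
  simp only [E, Matrix.trace, Matrix.diag, Matrix.mul_apply, Matrix.single,
    Matrix.of_apply, mul_ite, mul_one, mul_zero]
  simp [ite_and, Finset.sum_ite_eq]

lemma eq_zero_of_trace (m : Matrix (Fin n) (Fin n) ℂ)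
    (h : ∀ y, (m * y).trace = 0) : m = 0 := by
  ext i j
  have := h (E j i)
  rw [trace_mul_E] at this
  simpa using this

lemma sum_E_diag : (∑ k : Fin n, E k k) = (1 : Matrix (Fin n) (Fin n) ℂ) := by
  classical
  ext i j
  simp only [Matrix.sum_apply, E, Matrix.single, Matrix.of_apply, Matrix.one_apply,
    ite_and, Finset.sum_ite_eq]
  by_cases h : i = j <;> simp [h]

lemma E_mul_E_same (i j k : Fin n) : E i j * E j k = E i k := by
  rw [E, E, Matrix.single_mul_single_same, one_mul, E]

section Deriv

variable (D : Matrix (Fin n) (Fin n) ℂ →ₗ[ℂ] Matrix (Fin n) (Fin n) ℂ)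

lemma trace_D_idem (hD : ∀ u v, D (u * v) = D u * v + u * D v)
    {e : Matrix (Fin n) (Fin n) ℂ} (he : e * e = e) :
    (D e).trace = 0 := by
  have h1 : D e = D e * e + e * D e := by rw [← hD, he]
  have h2 : e * D e * e = 0 := by
    have h := congrArg (fun m => e * m * e) h1
    simp only [mul_add, add_mul, ← mul_assoc] at h
    rw [mul_assoc (e * D e) e e, he] at h
    exact (left_eq_add).mp h
  have h3 : (e * D e).trace = 0 := by
    calc (e * D e).trace = ((e * e) * D e).trace := by rw [he]
      _ = ((e * D e) * e).trace := by rw [mul_assoc, Matrix.trace_mul_comm]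
      _ = 0 := by rw [h2, Matrix.trace_zero]
  calc (D e).trace = (D e * e + e * D e).trace := by rw [← h1]
    _ = (D e * e).trace + (e * D e).trace := by rw [Matrix.trace_add]
    _ = (e * D e).trace + (e * D e).trace := by rw [Matrix.trace_mul_comm]
    _ = 0 := by rw [h3, add_zero]

lemma trace_D_comm (hD : ∀ u v, D (u * v) = D u * v + u * D v)
    (x y : Matrix (Fin n) (Fin n) ℂ) :
    (D (x * y - y * x)).trace = 0 := by
  rw [map_sub, hD, hD, Matrix.trace_sub, Matrix.trace_add, Matrix.trace_add,
    Matrix.trace_mul_comm (D x) y, Matrix.trace_mul_comm x (D y)]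
  ring

lemma trace_D_zero (hD : ∀ u v, D (u * v) = D u * v + u * D v)
    (x : Matrix (Fin n) (Fin n) ℂ) : (D x).trace = 0 := by
  have hunit : ∀ i j : Fin n, (D (E i j)).trace = 0 := by
    intro i j
    by_cases h : i = j
    · subst h
      exact trace_D_idem D hD (by simp [E])
    · have he : E i j = E i i * E i j - E i j * E i i := by
        rw [E, E, Matrix.single_mul_single_same, one_mul,
          Matrix.single_mul_single_of_ne (h := fun hji => h hji.symm), sub_zero]
      rw [he]
      exact trace_D_comm D hD _ _
  conv_lhs => rw [Matrix.matrix_eq_sum_single x]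
  rw [map_sum, Matrix.trace_sum]
  refine Finset.sum_eq_zero fun i _ => ?_
  rw [map_sum, Matrix.trace_sum]
  refine Finset.sum_eq_zero fun j _ => ?_
  rw [E_smul, _root_.map_smul, Matrix.trace_smul, hunit, smul_zero]

end Deriv

/-- Linear maps agreeing on matrix units agree. -/
lemma ext_units {F G : Matrix (Fin n) (Fin n) ℂ →ₗ[ℂ] Matrix (Fin n) (Fin n) ℂ}
    (h : ∀ i j, F (E i j) = G (E i j)) : F = G := by
  apply Module.Basis.ext (Matrix.stdBasis ℂ (Fin n) (Fin n))
  rintro ⟨i, j⟩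
  rw [Matrix.stdBasis_eq_single]
  exact h i j

end Stmt10Aux

open Stmt10Aux in
/-- Matrix-algebra instance of Theorem 3.4: every 2-local derivation on
`M_n(ℂ)` is an inner derivation. -/
theorem stmt_10
    (n : ℕ) (hn : 0 < n)
    (Δ : Matrix (Fin n) (Fin n) ℂ → Matrix (Fin n) (Fin n) ℂ)
    (h2loc : ∀ x y : Matrix (Fin n) (Fin n) ℂ,
      ∃ D : Matrix (Fin n) (Fin n) ℂ →ₗ[ℂ] Matrix (Fin n) (Fin n) ℂ,
        (∀ u v : Matrix (Fin n) (Fin n) ℂ, D (u * v) = D u * v + u * D v) ∧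
        Δ x = D x ∧ Δ y = D y) :
    ∃ a : Matrix (Fin n) (Fin n) ℂ,
      ∀ x : Matrix (Fin n) (Fin n) ℂ, Δ x = a * x - x * a := by
  classical
  -- Step 1: the skew-symmetry of the trace form of Δ
  have skew : ∀ x y, (Δ x * y).trace = -((x * Δ y).trace) := by
    intro x y
    obtain ⟨D, hD, hx, hy⟩ := h2loc x y
    have h0 := trace_D_zero D hD (x * y)
    rw [hD, Matrix.trace_add] at h0
    rw [hx, hy]
    linear_combination h0
  -- Step 2: Δ is additive and homogeneous
  have hadd : ∀ x y, Δ (x + y) = Δ x + Δ y := by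
    intro x y
    have h := eq_zero_of_trace (Δ (x + y) - Δ x - Δ y) ?_
    · rwa [sub_sub, sub_eq_zero] at h
    · intro z
      rw [sub_mul, sub_mul, Matrix.trace_sub, Matrix.trace_sub]
      simp only [skew]
      rw [add_mul, Matrix.trace_add]
      ring
  have hsmul : ∀ (c : ℂ) (x), Δ (c • x) = c • Δ x := by
    intro c x
    have h := eq_zero_of_trace (Δ (c • x) - c • Δ x) ?_
    · rwa [sub_eq_zero] at h
    · intro z
      rw [sub_mul, Matrix.trace_sub, smul_mul_assoc, Matrix.trace_smul]
      simp only [skew]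
      rw [smul_mul_assoc, Matrix.trace_smul]
      simp only [smul_eq_mul]
      ring
  -- package Δ as a linear map L
  set L : Matrix (Fin n) (Fin n) ℂ →ₗ[ℂ] Matrix (Fin n) (Fin n) ℂ :=
    { toFun := Δ, map_add' := hadd, map_smul' := hsmul } with hLdef
  have hL : ∀ x, Δ x = L x := fun _ => rfl
  -- Step 3: Jordan identity and one-sided Leibniz identities
  have jord : ∀ x, L (x * x) = L x * x + x * L x := by
    intro x
    obtain ⟨D, hD, hx, hxx⟩ := h2loc x (x * x)
    show Δ (x * x) = Δ x * x + x * Δ x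
    rw [hxx, hD, hx]
  have halfR : ∀ x y, ∃ m, L (x * y) = L x * y + x * m := by
    intro x y
    obtain ⟨D, hD, hx, hxy⟩ := h2loc x (x * y)
    refine ⟨D y, ?_⟩
    show Δ (x * y) = Δ x * y + x * D y
    rw [hxy, hD, hx]
  have halfL : ∀ x y, ∃ m, L (x * y) = m * y + x * L y := by
    intro x y
    obtain ⟨D, hD, hy, hxy⟩ := h2loc y (x * y)
    refine ⟨D x, ?_⟩
    show Δ (x * y) = D x * y + x * Δ y
    rw [hxy, hD, hy]
  -- Step 4: antisymmetry of the Leibniz defect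
  have pol : ∀ x y, L (x * y) + L (y * x)
      = L x * y + x * L y + L y * x + y * L x := by
    intro x y
    have h1 := jord (x + y)
    rw [show (x + y) * (x + y) = x * x + x * y + y * x + y * y by noncomm_ring] at h1
    rw [map_add, map_add, map_add, map_add, jord x, jord y] at h1
    simp only [add_mul, mul_add] at h1
    rw [← sub_eq_zero] at h1 ⊢
    rw [← sub_eq_zero] at h1
    abel_nf at h1 ⊢
    exact h1
  have anti : ∀ x y, L (x * y) - L x * y - x * L y
      = -(L (y * x) - L y * x - y * L x) := by
    intro x y
    have h := pol x y
    rw [eq_neg_iff_add_eq_zero]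
    rw [← sub_eq_zero] at h
    rw [show L (x * y) - L x * y - x * L y + (L (y * x) - L y * x - y * L x)
      = L (x * y) + L (y * x) - (L x * y + x * L y + L y * x + y * L x) by abel]
    exact h
  -- Step 5: Leibniz rule on matrix units
  have delta0 : ∀ i j k l : Fin n,
      L (E i j * E k l) = L (E i j) * E k l + E i j * L (E k l) := by
    intro i j k l
    by_cases hsame : i = k ∧ j = l
    · obtain ⟨rfl, rfl⟩ := hsame
      exact jord _
    · obtain ⟨m1, hm1⟩ := halfR (E i j) (E k l)
      obtain ⟨m2, hm2⟩ := halfL (E i j) (E k l)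
      obtain ⟨m1', hm1'⟩ := halfR (E k l) (E i j)
      obtain ⟨m2', hm2'⟩ := halfL (E k l) (E i j)
      have hrow : ∀ p q, p ≠ i →
          (L (E i j * E k l) - L (E i j) * E k l - E i j * L (E k l)) p q = 0 := by
        intro p q hp
        rw [show L (E i j * E k l) - L (E i j) * E k l - E i j * L (E k l)
          = E i j * (m1 - L (E k l)) by rw [hm1]; noncomm_ring]
        rw [E]
        exact Matrix.single_mul_apply_of_ne 1 i j p q hp _
      have hcol : ∀ p q, q ≠ l →
          (L (E i j * E k l) - L (E i j) * E k l - E i j * L (E k l)) p q = 0 := by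
        intro p q hq
        rw [show L (E i j * E k l) - L (E i j) * E k l - E i j * L (E k l)
          = (m2 - L (E i j)) * E k l by rw [hm2]; noncomm_ring]
        rw [E]
        exact Matrix.mul_single_apply_of_ne 1 k l p q hq _
      have hrow' : ∀ p q, p ≠ k →
          (L (E k l * E i j) - L (E k l) * E i j - E k l * L (E i j)) p q = 0 := by
        intro p q hp
        rw [show L (E k l * E i j) - L (E k l) * E i j - E k l * L (E i j)
          = E k l * (m1' - L (E i j)) by rw [hm1']; noncomm_ring]
        rw [E]
        exact Matrix.single_mul_apply_of_ne 1 k l p q hp _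
      have hcol' : ∀ p q, q ≠ j →
          (L (E k l * E i j) - L (E k l) * E i j - E k l * L (E i j)) p q = 0 := by
        intro p q hq
        rw [show L (E k l * E i j) - L (E k l) * E i j - E k l * L (E i j)
          = (m2' - L (E k l)) * E i j by rw [hm2']; noncomm_ring]
        rw [E]
        exact Matrix.mul_single_apply_of_ne 1 i j p q hq _
      have hz : L (E i j * E k l) - L (E i j) * E k l - E i j * L (E k l) = 0 := by
        ext p q
        rw [Matrix.zero_apply]
        by_cases hp : p = i
        · by_cases hq : q = l
          · rw [hp, hq, anti (E i j) (E k l), Matrix.neg_apply, neg_eq_zero]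
            by_cases hik : i = k
            · exact hcol' i l (fun hlj => hsame ⟨hik, hlj.symm⟩)
            · exact hrow' i l hik
          · exact hcol p q hq
        · exact hrow p q hp
      rw [sub_sub, sub_eq_zero] at hz
      exact hz
  -- Step 6: L is a derivation
  have leib1 : ∀ (i j : Fin n) (y), L (E i j * y) = L (E i j) * y + E i j * L y := by
    intro i j
    have hFG : L ∘ₗ LinearMap.mulLeft ℂ (E i j)
        = LinearMap.mulLeft ℂ (L (E i j)) + LinearMap.mulLeft ℂ (E i j) ∘ₗ L :=
      ext_units fun k l => by
        simp only [LinearMap.comp_apply, LinearMap.mulLeft_apply, LinearMap.add_apply]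
        exact delta0 i j k l
    intro y
    have h := DFunLike.congr_fun hFG y
    simpa only [LinearMap.comp_apply, LinearMap.mulLeft_apply, LinearMap.add_apply] using h
  have hLeib : ∀ x y, L (x * y) = L x * y + x * L y := by
    intro x y
    have hFG : L ∘ₗ LinearMap.mulRight ℂ y
        = LinearMap.mulRight ℂ y ∘ₗ L + LinearMap.mulRight ℂ (L y) :=
      ext_units fun i j => by
        simp only [LinearMap.comp_apply, LinearMap.mulRight_apply, LinearMap.add_apply]
        rw [leib1 i j y]
    have h := DFunLike.congr_fun hFG x
    simp only [LinearMap.comp_apply, LinearMap.mulRight_apply, LinearMap.add_apply] at h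
    rw [h]
  -- Step 7: the derivation L is inner
  set i0 : Fin n := ⟨0, hn⟩ with hi0
  set a : Matrix (Fin n) (Fin n) ℂ := ∑ k, L (E k i0) * E i0 k with ha
  have key_unit : ∀ i j : Fin n, L (E i j) = a * E i j - E i j * a := by
    intro i j
    have h1 : a * E i j = L (E i i0) * E i0 j := by
      rw [ha, Finset.sum_mul]
      rw [Finset.sum_eq_single i]
      · rw [mul_assoc, E_mul_E_same]
      · intro k _ hk
        rw [mul_assoc]
        simp only [E]
        rw [Matrix.single_mul_single_of_ne (h := hk), mul_zero]
      · intro h; exact absurd (Finset.mem_univ i) h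
    have h2 : E i j * a = L (E i i0) * E i0 j - L (E i j) := by
      rw [ha, Finset.mul_sum]
      have hterm : ∀ k : Fin n, E i j * (L (E k i0) * E i0 k)
          = (if k = j then L (E i i0) * E i0 j else 0) - L (E i j) * (E k i0 * E i0 k) := by
        intro k
        by_cases hk : k = j
        · rw [hk]
          have hlb := hLeib (E i j) (E j i0)
          rw [E_mul_E_same] at hlb
          rw [if_pos rfl, ← mul_assoc,
            show E i j * L (E j i0) = L (E i i0) - L (E i j) * E j i0 by
              rw [eq_sub_iff_add_eq, add_comm]; exact hlb.symm]
          rw [sub_mul, mul_assoc]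
        · have hlb := hLeib (E i j) (E k i0)
          rw [show E i j * E k i0 = 0 from by
              rw [E, E]; exact Matrix.single_mul_single_of_ne (c := (1 : ℂ)) i j k (fun h => hk h.symm) (1 : ℂ),
            map_zero] at hlb
          rw [if_neg hk, ← mul_assoc,
            show E i j * L (E k i0) = - (L (E i j) * E k i0) by
              rw [eq_neg_iff_add_eq_zero, add_comm]; exact hlb.symm]
          rw [neg_mul, mul_assoc, zero_sub]
      rw [Finset.sum_congr rfl fun k _ => hterm k, Finset.sum_sub_distrib,
        Finset.sum_ite_eq' Finset.univ j fun _ => L (E i i0) * E i0 j]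
      rw [if_pos (Finset.mem_univ j), ← Finset.mul_sum,
        show (∑ k : Fin n, E k i0 * E i0 k) = (1 : Matrix (Fin n) (Fin n) ℂ) from by
          rw [← sum_E_diag]; exact Finset.sum_congr rfl fun k _ => E_mul_E_same k i0 k,
        mul_one]
    rw [h1, h2]
    abel
  refine ⟨a, fun x => ?_⟩
  rw [hL x]
  have hFG : L = LinearMap.mulLeft ℂ a - LinearMap.mulRight ℂ a :=
    ext_units fun i j => by
      simp only [LinearMap.sub_apply, LinearMap.mulLeft_apply, LinearMap.mulRight_apply]
      exact key_unit i j
  rw [hFG]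
  simp only [LinearMap.sub_apply, LinearMap.mulLeft_apply, LinearMap.mulRight_apply]
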